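/- Let G be a GFP sequence. Then for every integer n ≥ 1, Σ_{j=1}^{n} d · g^{n−j} · G(j)² = G(n+1)·G(n) − g^{n}·G(1)·G(0). -/

import Mathlib

open Polynomial Finset

theorem GFP_weighted_square_sum (d g : Polynomial ℤ) (hd : d ≠ 0) (hg : g ≠ 0)
    (G : ℕ → Polynomial ℤ) (p₀ : ℤ) (h0 : G 0 = C p₀) (h1 : G 1 ≠ 0)
    (hrec : ∀ n : ℕ, 2 ≤ n → G n = d * G (n - 1) + g * G (n - 2))
    (n : ℕ) (hn : 1 ≤ n) :
    ∑ j ∈ Finset.Icc 1 n, d * g ^ (n - j) * G j ^ 2 =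
      G (n + 1) * G n - g ^ n * G 1 * G 0 := by
  induction n, hn using Nat.le_induction with
  | base =>
    have h2 := hrec 2 (le_refl 2)
    simp only [show (2:ℕ)-1 = 1 from rfl, show (2:ℕ)-2 = 0 from rfl] at h2
    simp [h2]
    ring
  | succ n hn ih =>
    rw [Finset.sum_Icc_succ_top (by omega : 1 ≤ n + 1)]
    have hsum : ∑ j ∈ Finset.Icc 1 n, d * g ^ (n + 1 - j) * G j ^ 2
        = g * ∑ j ∈ Finset.Icc 1 n, d * g ^ (n - j) * G j ^ 2 := by
      rw [Finset.mul_sum]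
      apply Finset.sum_congr rfl
      intro j hj
      simp only [Finset.mem_Icc] at hj
      have : n + 1 - j = (n - j) + 1 := by omega
      rw [this, pow_succ]
      ring
    rw [hsum, ih]
    have h2 := hrec (n + 2) (by omega)
    simp only [show n + 2 - 1 = n + 1 from rfl, show n + 2 - 2 = n from rfl] at h2
    simp only [show n + 1 + 1 = n + 2 from rfl, h2, pow_succ, Nat.sub_self, pow_zero]
    ring
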